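/- Let R = k[[x]] and for α ∈ ℝ_{>0} let J^(α) be the filtration with J^(α)_m = (x^{⌈αm⌉}). Then the Rees algebra R[J^(α)] = Σ_m (x^{⌈αm⌉}) t^m is integrally closed in R[t]. -/

import Mathlib

open Filter Topology Polynomial
open scoped ENNReal

/-- A filtration `I = {I_m}` of ideals of `R`: `I_0 = R`, `I_{n+1} ⊆ I_n`,
and `I_m · I_n ⊆ I_{m+n}`. -/
structure RingFiltration (R : Type*) [CommRing R] where
  I : ℕ → Ideal R
  top_eq : I 0 = ⊤
  antitone_succ : ∀ n, I (n + 1) ≤ I n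
  mul_le : ∀ m n, I m * I n ≤ I (m + n)

namespace RingFiltration
variable {R : Type*} [CommRing R] (F : RingFiltration R)

/-- The order function `ν_I(f) = sup {m : f ∈ I_m}`, viewed in `[0,∞]`. -/
noncomputable def nu (f : R) : ℝ≥0∞ :=
  sSup ((fun m : ℕ => (m : ℝ≥0∞)) '' {m | f ∈ F.I m})

/-- The asymptotic Samuel function `ν̄_I(f) = lim_n ν_I(f^n)/n` (the limit exists and
equals the limsup used here to define it). -/
noncomputable def nubar (f : R) : ℝ≥0∞ :=
  Filter.limsup (fun n : ℕ => F.nu (f ^ n) / (n : ℝ≥0∞)) Filter.atTop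

end RingFiltration

/-- The Rees algebra `Σ_m F_m t^m ⊆ R[t]` of a filtration, realized as the subalgebra of
polynomials whose `m`-th coefficient lies in `F_m`. -/
def RingFiltration.reesAlgebra {R : Type*} [CommRing R] (F : RingFiltration R) :
    Subalgebra R (Polynomial R) where
  carrier := {p | ∀ m, p.coeff m ∈ F.I m}
  add_mem' := fun hp hq m => by
    simpa [Polynomial.coeff_add] using (F.I m).add_mem (hp m) (hq m)
  mul_mem' := by
    intro p q hp hq m
    rw [Polynomial.coeff_mul]
    refine Ideal.sum_mem _ fun x hx => ?_
    have h : x.1 + x.2 = m := Finset.HasAntidiagonal.mem_antidiagonal.mp hx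
    exact h ▸ F.mul_le x.1 x.2 (Ideal.mul_mem_mul (hp x.1) (hq x.2))
  algebraMap_mem' := by
    intro r m
    rw [Polynomial.algebraMap_eq, Polynomial.coeff_C]
    split
    · next h => subst h; rw [F.top_eq]; trivial
    · exact (F.I m).zero_mem

section Aux
variable {k : Type*} [Field k] (α : ℝ)

/-- `q` has "valuation" ≥ `r` (condition 1), strict above degree `i` (condition 2),
and `E` is the pivot x-order: `E = r + α i`. -/
private def Ld (q : Polynomial (PowerSeries k)) (r : ℝ) (i E : ℕ) : Prop :=
  (∀ a u : ℕ, (u : ℝ) < r + α * a → PowerSeries.coeff u (q.coeff a) = 0) ∧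
  (∀ a : ℕ, i < a → ∀ u : ℕ, (u : ℝ) ≤ r + α * a → PowerSeries.coeff u (q.coeff a) = 0) ∧
  ((E : ℝ) = r + α * i)

private lemma ld_one : Ld α (1 : Polynomial (PowerSeries k)) 0 0 0 := by
  refine ⟨?_, ?_, by simp⟩
  · intro a u hu
    rcases Nat.eq_zero_or_pos a with rfl | ha
    · simp at hu
      exact absurd hu (not_lt.mpr u.cast_nonneg)
    · rw [Polynomial.coeff_one, if_neg (by omega)]
      simp
  · intro a ha u _
    rw [Polynomial.coeff_one, if_neg (by omega)]
    simp

private lemma ld1_mul {q w : Polynomial (PowerSeries k)} {r s : ℝ}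
    (hq : ∀ a u : ℕ, (u : ℝ) < r + α * a → PowerSeries.coeff u (q.coeff a) = 0)
    (hw : ∀ a u : ℕ, (u : ℝ) < s + α * a → PowerSeries.coeff u (w.coeff a) = 0) :
    ∀ a u : ℕ, (u : ℝ) < (r + s) + α * a → PowerSeries.coeff u ((q * w).coeff a) = 0 := by
  intro a u hu
  rw [Polynomial.coeff_mul, map_sum]
  refine Finset.sum_eq_zero fun x hx => ?_
  rw [PowerSeries.coeff_mul]
  refine Finset.sum_eq_zero fun y hy => ?_
  have hx' : x.1 + x.2 = a := Finset.HasAntidiagonal.mem_antidiagonal.mp hx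
  have hy' : y.1 + y.2 = u := Finset.HasAntidiagonal.mem_antidiagonal.mp hy
  have hxr : (x.1 : ℝ) + x.2 = a := by exact_mod_cast congrArg (Nat.cast : ℕ → ℝ) hx'
  have hyr : (y.1 : ℝ) + y.2 = u := by exact_mod_cast congrArg (Nat.cast : ℕ → ℝ) hy'
  have haa : α * (a : ℝ) = α * x.1 + α * x.2 := by rw [← hxr]; ring
  by_cases h1 : (y.1 : ℝ) < r + α * x.1
  · rw [hq _ _ h1, zero_mul]
  · push_neg at h1
    have h2 : (y.2 : ℝ) < s + α * x.2 := by linarith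
    rw [hw _ _ h2, mul_zero]

private lemma ld_mul {q w : Polynomial (PowerSeries k)} {r s : ℝ} {i i' E E' : ℕ}
    (hq : Ld α q r i E) (hw : Ld α w s i' E') :
    Ld α (q * w) (r + s) (i + i') (E + E') := by
  obtain ⟨hq1, hq2, hqE⟩ := hq
  obtain ⟨hw1, hw2, hwE⟩ := hw
  refine ⟨ld1_mul α hq1 hw1, ?_, ?_⟩
  · intro a ha u hu
    rw [Polynomial.coeff_mul, map_sum]
    refine Finset.sum_eq_zero fun x hx => ?_
    rw [PowerSeries.coeff_mul]
    refine Finset.sum_eq_zero fun y hy => ?_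
    have hx' : x.1 + x.2 = a := Finset.HasAntidiagonal.mem_antidiagonal.mp hx
    have hy' : y.1 + y.2 = u := Finset.HasAntidiagonal.mem_antidiagonal.mp hy
    have hxr : (x.1 : ℝ) + x.2 = a := by exact_mod_cast congrArg (Nat.cast : ℕ → ℝ) hx'
    have hyr : (y.1 : ℝ) + y.2 = u := by exact_mod_cast congrArg (Nat.cast : ℕ → ℝ) hy'
    have haa : α * (a : ℝ) = α * x.1 + α * x.2 := by rw [← hxr]; ring
    rcases (by omega : i < x.1 ∨ i' < x.2) with hc | hc
    · by_cases h1 : (y.1 : ℝ) ≤ r + α * x.1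
      · rw [hq2 _ hc _ h1, zero_mul]
      · push_neg at h1
        have h2 : (y.2 : ℝ) < s + α * x.2 := by linarith
        rw [hw1 _ _ h2, mul_zero]
    · by_cases h1 : (y.2 : ℝ) ≤ s + α * x.2
      · rw [hw2 _ hc _ h1, mul_zero]
      · push_neg at h1
        have h2 : (y.1 : ℝ) < r + α * x.1 := by linarith
        rw [hq1 _ _ h2, zero_mul]
  · push_cast
    rw [hqE, hwE]; ring

private lemma ld_mul_coeff {q w : Polynomial (PowerSeries k)} {r s : ℝ} {i i' E E' : ℕ}
    (hq : Ld α q r i E) (hw : Ld α w s i' E') :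
    PowerSeries.coeff (E + E') ((q * w).coeff (i + i')) =
      PowerSeries.coeff E (q.coeff i) * PowerSeries.coeff E' (w.coeff i') := by
  obtain ⟨hq1, hq2, hqE⟩ := hq
  obtain ⟨hw1, hw2, hwE⟩ := hw
  have hEE : (E : ℝ) + E' = r + s + α * i + α * i' := by rw [hqE, hwE]; ring
  rw [Polynomial.coeff_mul, map_sum,
    Finset.sum_eq_single_of_mem (i, i') (Finset.HasAntidiagonal.mem_antidiagonal.mpr rfl) ?_]
  · rw [PowerSeries.coeff_mul,
      Finset.sum_eq_single_of_mem (E, E') (Finset.HasAntidiagonal.mem_antidiagonal.mpr rfl) ?_]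
    intro y hy hyne
    have hy' : y.1 + y.2 = E + E' := Finset.HasAntidiagonal.mem_antidiagonal.mp hy
    have hne' : ¬(y.1 = E ∧ y.2 = E') := fun ⟨h1, h2⟩ => hyne (Prod.ext h1 h2)
    rcases (by omega : y.1 < E ∨ y.2 < E') with hc | hc
    · have : (y.1 : ℝ) < r + α * i := by
        rw [← hqE]; exact_mod_cast hc
      rw [hq1 _ _ this, zero_mul]
    · have : (y.2 : ℝ) < s + α * i' := by
        rw [← hwE]; exact_mod_cast hc
      rw [hw1 _ _ this, mul_zero]
  · intro x hx hxne
    have hx' : x.1 + x.2 = i + i' := Finset.HasAntidiagonal.mem_antidiagonal.mp hx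
    have hxr : (x.1 : ℝ) + x.2 = (i : ℝ) + i' := by exact_mod_cast congrArg (Nat.cast : ℕ → ℝ) hx'
    rw [PowerSeries.coeff_mul]
    refine Finset.sum_eq_zero fun y hy => ?_
    have hy' : y.1 + y.2 = E + E' := Finset.HasAntidiagonal.mem_antidiagonal.mp hy
    have hyr : (y.1 : ℝ) + y.2 = (E : ℝ) + E' := by exact_mod_cast congrArg (Nat.cast : ℕ → ℝ) hy'
    have haa : α * (i : ℝ) + α * i' = α * x.1 + α * x.2 := by
      rw [← mul_add, ← mul_add, hxr]
    have hne' : ¬(x.1 = i ∧ x.2 = i') := fun ⟨h1, h2⟩ => hxne (Prod.ext h1 h2)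
    rcases (by omega : i < x.1 ∨ i' < x.2) with hc | hc
    · by_cases h1 : (y.1 : ℝ) ≤ r + α * x.1
      · rw [hq2 _ hc _ h1, zero_mul]
      · push_neg at h1
        have h2 : (y.2 : ℝ) < s + α * x.2 := by linarith
        rw [hw1 _ _ h2, mul_zero]
    · by_cases h1 : (y.2 : ℝ) ≤ s + α * x.2
      · rw [hw2 _ hc _ h1, mul_zero]
      · push_neg at h1
        have h2 : (y.1 : ℝ) < r + α * x.1 := by linarith
        rw [hq1 _ _ h2, zero_mul]

private lemma ld_congr {q : Polynomial (PowerSeries k)} {r r' : ℝ} {i E : ℕ}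
    (h : Ld α q r i E) (hr : r = r') : Ld α q r' i E := hr ▸ h

private lemma ld_pow {p : Polynomial (PowerSeries k)} {v : ℝ} {i0 e : ℕ}
    (h : Ld α p v i0 e) (n : ℕ) :
    Ld α (p ^ n) ((n : ℝ) * v) (n * i0) (n * e) ∧
      PowerSeries.coeff (n * e) ((p ^ n).coeff (n * i0)) =
        (PowerSeries.coeff e (p.coeff i0)) ^ n := by
  induction n with
  | zero =>
    constructor
    · rw [pow_zero, Nat.zero_mul, Nat.zero_mul]
      exact ld_congr α (ld_one α) (by norm_num)
    · simp [Polynomial.coeff_one]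
  | succ n ih =>
    have hmul := ld_mul α ih.1 h
    have hkey : ((n : ℝ) * v + v) = ((n + 1 : ℕ) : ℝ) * v := by push_cast; ring
    have hi : n * i0 + i0 = (n + 1) * i0 := by ring
    have he : n * e + e = (n + 1) * e := by ring
    constructor
    · rw [pow_succ, ← hi, ← he]
      exact ld_congr α hmul hkey
    · rw [pow_succ, ← hi, ← he, ld_mul_coeff α ih.1 h, ih.2, pow_succ]

end Aux

/-- In `R = k[[x]]`, for real `α > 0` the Rees algebra of the twisted filtration
`J^(α)` with `J^(α)_m = (x^{⌈αm⌉})` is integrally closed in `R[t]`. -/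
theorem powerSeries_reesAlgebra_integrallyClosed {k : Type*} [Field k] (α : ℝ)
    (hα : 0 < α) (G : RingFiltration (PowerSeries k))
    (hG : ∀ m : ℕ, G.I m = Ideal.span {(PowerSeries.X : PowerSeries k) ^ ⌈α * m⌉₊})
    (p : Polynomial (PowerSeries k)) (hp : IsIntegral (↥G.reesAlgebra) p) :
    p ∈ G.reesAlgebra := by
  classical
  -- membership characterization
  have memA : ∀ q : Polynomial (PowerSeries k), q ∈ G.reesAlgebra ↔
      ∀ m : ℕ, ∀ j : ℕ, (j : ℝ) < α * m → PowerSeries.coeff j (q.coeff m) = 0 := by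
    intro q
    have hmem : q ∈ G.reesAlgebra ↔ ∀ m, q.coeff m ∈ G.I m := Iff.rfl
    rw [hmem]
    constructor
    · intro hq m j hj
      have h := hq m
      rw [hG m, Ideal.mem_span_singleton, PowerSeries.X_pow_dvd_iff] at h
      exact h j (Nat.lt_ceil.mpr hj)
    · intro h m
      rw [hG m, Ideal.mem_span_singleton, PowerSeries.X_pow_dvd_iff]
      exact fun j hj => h m j (Nat.lt_ceil.mp hj)
  by_contra hpA
  have hp0 : p ≠ 0 := fun h => hpA (h ▸ (G.reesAlgebra).zero_mem)
  rw [memA] at hpA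
  push_neg at hpA
  obtain ⟨m₀, j₀, hj₀lt, hj₀ne⟩ := hpA
  -- order function
  set o : ℕ → ℕ := fun m => sInf {j : ℕ | PowerSeries.coeff j (p.coeff m) ≠ 0} with ho
  have ho_spec : ∀ m, p.coeff m ≠ 0 → PowerSeries.coeff (o m) (p.coeff m) ≠ 0 := by
    intro m hm
    have hne : {j : ℕ | PowerSeries.coeff j (p.coeff m) ≠ 0}.Nonempty := by
      by_contra hc
      rw [Set.not_nonempty_iff_eq_empty] at hc
      refine hm (PowerSeries.ext fun j => ?_)
      have : j ∉ {j : ℕ | PowerSeries.coeff j (p.coeff m) ≠ 0} := hc ▸ Set.notMem_empty j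
      simpa using not_not.mp (fun h => this h)
    exact Nat.sInf_mem hne
  have ho_lt : ∀ m, ∀ j : ℕ, j < o m → PowerSeries.coeff j (p.coeff m) = 0 := by
    intro m j hj
    by_contra hc
    have h1 : o m ≤ j := Nat.sInf_le hc
    omega
  set val : ℕ → ℝ := fun m => (o m : ℝ) - α * m with hval
  have hm₀supp : m₀ ∈ p.support := Polynomial.mem_support_iff.mpr (fun h => hj₀ne (by simp [h]))
  obtain ⟨mmin, hmminmem, hmmin⟩ := p.support.exists_min_image val ⟨m₀, hm₀supp⟩
  set v : ℝ := val mmin with hv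
  set T' : Finset ℕ := p.support.filter (fun m => val m ≤ v) with hT'
  have hT'ne : T'.Nonempty := ⟨mmin, Finset.mem_filter.mpr ⟨hmminmem, le_refl _⟩⟩
  set i0 : ℕ := T'.max' hT'ne with hi0
  have hi0mem : i0 ∈ T' := T'.max'_mem hT'ne
  have hi0supp : i0 ∈ p.support := (Finset.mem_filter.mp hi0mem).1
  have hvali0 : val i0 = v := le_antisymm (Finset.mem_filter.mp hi0mem).2 (hmmin i0 hi0supp)
  have hstrict : ∀ b ∈ p.support, i0 < b → v < val b := by
    intro b hb hbgt
    by_contra hc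
    push_neg at hc
    exact absurd (T'.le_max' b (Finset.mem_filter.mpr ⟨hb, hc⟩)) (by omega)
  set e : ℕ := o i0 with he
  set ℓ : k := PowerSeries.coeff e (p.coeff i0) with hℓ
  have hℓne : ℓ ≠ 0 := ho_spec i0 (Polynomial.mem_support_iff.mp hi0supp)
  have hvneg : v < 0 := by
    have h1 : v ≤ val m₀ := hmmin m₀ hm₀supp
    have h2 : (o m₀ : ℝ) ≤ j₀ := by
      exact_mod_cast Nat.sInf_le (show j₀ ∈ {j : ℕ | PowerSeries.coeff j (p.coeff m₀) ≠ 0} from hj₀ne)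
    simp only [hval] at h1
    linarith
  have hEeq : (e : ℝ) = v + α * i0 := by
    have := hvali0
    simp only [hval] at this
    linarith [this]
  -- Ld for p
  have hLd : Ld α p v i0 e := by
    refine ⟨?_, ?_, hEeq⟩
    · intro a u hu
      by_cases hpa : p.coeff a = 0
      · simp [hpa]
      · have ha : a ∈ p.support := Polynomial.mem_support_iff.mpr hpa
        have h1 : v ≤ val a := hmmin a ha
        simp only [hval] at h1
        have : (u : ℝ) < (o a : ℝ) := by linarith
        exact ho_lt a u (by exact_mod_cast this)
    · intro a hgt u hu
      by_cases hpa : p.coeff a = 0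
      · simp [hpa]
      · have ha : a ∈ p.support := Polynomial.mem_support_iff.mpr hpa
        have h1 : v < val a := hstrict a ha hgt
        simp only [hval] at h1
        have : (u : ℝ) < (o a : ℝ) := by linarith
        exact ho_lt a u (by exact_mod_cast this)
  -- integral equation
  obtain ⟨f, hfm, hfe⟩ := hp
  set n : ℕ := f.natDegree with hn
  have hn1 : 1 ≤ n := by
    by_contra h
    have h0 : f.natDegree = 0 := by omega
    have : f = 1 := (Polynomial.Monic.natDegree_eq_zero hfm).mp h0
    rw [this] at hfe
    simp at hfe
  have hexp : (p : Polynomial (PowerSeries k)) ^ n =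
      -∑ i ∈ Finset.range n, ((f.coeff i : ↥G.reesAlgebra) : Polynomial (PowerSeries k)) * p ^ i := by
    have h0 : (0 : Polynomial (PowerSeries k)) =
        ∑ i ∈ Finset.range (n + 1), f.coeff i • p ^ i := by
      have hfe' : Polynomial.aeval p f = 0 := by rw [Polynomial.aeval_def]; exact hfe
      rw [← Polynomial.aeval_eq_sum_range, hfe']
    rw [Finset.sum_range_succ] at h0
    have hcn : f.coeff n • p ^ n = p ^ n := by
      rw [hn, hfm.coeff_natDegree, one_smul]
    rw [hcn] at h0
    have hsm : ∀ i, f.coeff i • p ^ i =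
        ((f.coeff i : ↥G.reesAlgebra) : Polynomial (PowerSeries k)) * p ^ i := by
      intro i
      rw [Algebra.smul_def]
      rfl
    simp only [hsm] at h0
    linear_combination -h0
  -- the contradiction
  have hpow := ld_pow α hLd n
  have lhs : PowerSeries.coeff (n * e) ((p ^ n).coeff (n * i0)) = ℓ ^ n := hpow.2
  have rhs : PowerSeries.coeff (n * e) ((p ^ n).coeff (n * i0)) = 0 := by
    rw [hexp, Polynomial.coeff_neg, map_neg, neg_eq_zero, Polynomial.finset_sum_coeff, map_sum]
    refine Finset.sum_eq_zero fun i hi => ?_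
    have hi' : i < n := Finset.mem_range.mp hi
    have hci : ∀ a u : ℕ, (u : ℝ) < 0 + α * a →
        PowerSeries.coeff u
          (((f.coeff i : ↥G.reesAlgebra) : Polynomial (PowerSeries k)).coeff a) = 0 := by
      intro a u hu
      rw [zero_add] at hu
      exact (memA _).mp (f.coeff i).2 a u hu
    refine ld1_mul α hci (ld_pow α hLd i).1.1 (n * i0) (n * e) ?_
    have h1 : (n * e : ℕ) = ((n : ℝ) * e : ℝ) := by push_cast; ring
    have h2 : ((i : ℝ)) < n := by exact_mod_cast hi'
    have h3 : (n : ℝ) * v < (i : ℝ) * v := by nlinarith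
    have h4 : ((n * e : ℕ) : ℝ) = (n : ℝ) * v + α * ((n * i0 : ℕ) : ℝ) := by
      push_cast
      rw [hEeq]; ring
    rw [h4]
    push_cast
    linarith
  rw [lhs] at rhs
  exact pow_ne_zero n hℓne rhs
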